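/- In the SGD setting of the paper with i.i.d. uniform-on-[-c,c]^{P(a)} initializations, for every κ ∈ (0,1) and every k ∈ N there exists an architecture a = (a_0,...,a_D) with min{D, a_1,...,a_{D-1}} ≥ k such that for all batch sizes M ∈ N, inf_{T ∈ N_0} E[min{∫ |𝔠(N_a^{Θ*}(x)) - E(x)| P_X(dx), 1}] ≥ κ · min{inf_{b∈R} E[|b - E(X)|], 1}, where Θ* is the empirical-risk-minimizing parameter among N trajectories and T+1 steps. -/

import Mathlib

open MeasureTheory ProbabilityTheory

noncomputable section

/-- `layerSum a j = ∑_{i=1}^{j} a_i (a_{i-1}+1)`, the number of parameters in layers `1,…,j`. -/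
def layerSum (a : ℕ → ℕ) (j : ℕ) : ℕ := ∑ i ∈ Finset.Icc 1 j, a i * (a (i - 1) + 1)

/-- The affine map of a layer with `m` outputs, `n` inputs, parameters read from `θ`
starting at offset `k` (weights row-wise, then biases). -/
def affApply (m n : ℕ) (θ : ℕ → ℝ) (k : ℕ) (y : Fin n → ℝ) : Fin m → ℝ :=
  fun i => (∑ l : Fin n, θ (k + i.val * n + l.val) * y l) + θ (k + m * n + i.val)

/-- Forward pass through the first `j` layers of the network, with componentwise ReLU
applied after each affine layer. -/
def fwd (a : ℕ → ℕ) (θ : ℕ → ℝ) (x : Fin (a 0) → ℝ) : (j : ℕ) → Fin (a j) → ℝ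
  | 0 => x
  | j + 1 => fun i => max (affApply (a (j + 1)) (a j) θ (layerSum a j) (fwd a θ x j) i) 0

/-- The realization `N_a^θ : ℝ^{a 0} → ℝ^{a D}` of the fully connected feedforward ReLU
network with architecture `a = (a 0, …, a D)` and parameters `θ`:
ReLU after each of the hidden layers `1,…,D-1`, linear read-out layer `D`. -/
def realization (a : ℕ → ℕ) (D : ℕ) (θ : ℕ → ℝ) (x : Fin (a 0) → ℝ) : Fin (a D) → ℝ :=
  affApply (a D) (a (D - 1)) θ (layerSum a (D - 1)) (fwd a θ x (D - 1))

/-- All weights and biases of layer `j` (the parameter block with indices in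
`[layerSum a (j-1), layerSum a j)`) are strictly negative. -/
def layerNeg (a : ℕ → ℕ) (j : ℕ) (θ : ℕ → ℝ) : Prop :=
  ∀ i, layerSum a (j - 1) ≤ i → i < layerSum a j → θ i < 0

/-- The inactive set `I_a`: some hidden layer `j` with `1 < j < D` has all its weights and
biases strictly negative. -/
def Inactive (a : ℕ → ℕ) (D : ℕ) (θ : ℕ → ℝ) : Prop :=
  ∃ j, 1 < j ∧ j < D ∧ layerNeg a j θ

end

open scoped ENNReal

noncomputable section Det

lemma layerSum_succ (a : ℕ → ℕ) (m : ℕ) :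
    layerSum a (m + 1) = layerSum a m + a (m + 1) * (a m + 1) := by
  unfold layerSum
  rw [Finset.sum_Icc_succ_top (by omega : 1 ≤ m + 1)]
  simp

lemma layerSum_mono (a : ℕ → ℕ) {j j' : ℕ} (h : j ≤ j') : layerSum a j ≤ layerSum a j' :=
  Finset.sum_le_sum_of_subset (Finset.Icc_subset_Icc_right h)

lemma affApply_congr {m n : ℕ} {θ θ' : ℕ → ℝ} {k : ℕ} {y y' : Fin n → ℝ}
    (hθ : ∀ i, k ≤ i → θ i = θ' i) (hy : y = y') :
    affApply m n θ k y = affApply m n θ' k y' := by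
  subst hy; funext i
  unfold affApply
  congr 1
  · exact Finset.sum_congr rfl fun l _ => by rw [hθ _ (by omega)]
  · exact hθ _ (by omega)

lemma fwd_succ (a : ℕ → ℕ) (θ : ℕ → ℝ) (x : Fin (a 0) → ℝ) (j : ℕ) :
    fwd a θ x (j + 1)
      = fun i => max (affApply (a (j + 1)) (a j) θ (layerSum a j) (fwd a θ x j) i) 0 := rfl

lemma fwd_congr_from {a : ℕ → ℕ} {θ θ' : ℕ → ℝ} {x x' : Fin (a 0) → ℝ} {j : ℕ}
    (hθ : ∀ i, layerSum a j ≤ i → θ i = θ' i)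
    (hj : fwd a θ x j = fwd a θ' x' j) :
    ∀ j', j ≤ j' → fwd a θ x j' = fwd a θ' x' j' := by
  intro j' hjj'
  induction j' with
  | zero =>
      have : j = 0 := by omega
      exact this ▸ hj
  | succ j' ih =>
      rcases Nat.lt_or_ge j' j with h | h
      · have : j = j' + 1 := by omega
        exact this ▸ hj
      · rw [fwd_succ, fwd_succ,
          affApply_congr (fun i hi => hθ i (le_trans (layerSum_mono a h) hi)) (ih h)]

lemma fwd_nonneg (a : ℕ → ℕ) (θ : ℕ → ℝ) (x : Fin (a 0) → ℝ) (j : ℕ) (hj : 1 ≤ j)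
    (i : Fin (a j)) : 0 ≤ fwd a θ x j i := by
  cases j with
  | zero => omega
  | succ m => exact le_max_right _ _

lemma fwd_eq_zero_of_layerNeg {a : ℕ → ℕ} {θ : ℕ → ℝ} {j : ℕ} (hj : 2 ≤ j)
    (hneg : layerNeg a j θ) (x : Fin (a 0) → ℝ) :
    fwd a θ x j = fun _ => 0 := by
  obtain ⟨m, rfl⟩ : ∃ m, j = m + 1 := ⟨j - 1, by omega⟩
  funext i
  rw [fwd_succ]
  simp only
  rw [max_eq_right]
  apply le_of_lt
  unfold affApply
  have hLS := layerSum_succ a m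
  have hmul : a (m + 1) * (a m + 1) = a (m + 1) * a m + a (m + 1) := by ring
  have hbias : θ (layerSum a m + a (m + 1) * a m + i.val) < 0 := by
    apply hneg
    · simp; omega
    · have := i.isLt
      omega
  have hsum : (∑ l : Fin (a m), θ (layerSum a m + i.val * a m + l.val) * fwd a θ x m l) ≤ 0 := by
    apply Finset.sum_nonpos
    intro l _
    apply mul_nonpos_of_nonpos_of_nonneg
    · apply le_of_lt
      apply hneg
      · simp; omega
      · have hl := l.isLt
        have hi := i.isLt
        have h1 : i.val * a m + l.val < a (m + 1) * a m := by
          calc i.val * a m + l.val < i.val * a m + a m := by omega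
            _ = (i.val + 1) * a m := by ring
            _ ≤ a (m + 1) * a m := Nat.mul_le_mul_right _ (by omega)
        omega
    · exact fwd_nonneg a θ x m (by omega) l
  linarith

lemma realization_const {a : ℕ → ℕ} {D j : ℕ} {θ : ℕ → ℝ} (hj1 : 1 < j) (hjD : j < D)
    (hneg : layerNeg a j θ) (x x' : Fin (a 0) → ℝ) :
    realization a D θ x = realization a D θ x' := by
  have h := fwd_congr_from (θ := θ) (θ' := θ) (x := x) (x' := x') (j := j)
    (fun _ _ => rfl)
    (by rw [fwd_eq_zero_of_layerNeg (by omega) hneg x,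
            fwd_eq_zero_of_layerNeg (by omega) hneg x'])
  unfold realization
  rw [h (D - 1) (by omega)]

lemma layerNeg_update {a : ℕ → ℕ} {j : ℕ} {θ : ℕ → ℝ} (hneg : layerNeg a j θ)
    {i : ℕ} {s : ℝ} (hs : s < 0 ∨ i < layerSum a (j - 1)) :
    layerNeg a j (Function.update θ i s) := by
  intro m h1 h2
  by_cases hm : m = i
  · subst hm; rw [Function.update_self]
    rcases hs with h | h
    · exact h
    · exact absurd h1 (by omega)
  · rw [Function.update_of_ne hm]; exact hneg m h1 h2

lemma realization_update {a : ℕ → ℕ} {D j : ℕ} (hj1 : 1 < j) (hjD : j < D)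
    {θ : ℕ → ℝ} {i : ℕ} (hi : i < layerSum a j) {s : ℝ}
    (hneg' : layerNeg a j (Function.update θ i s))
    (hneg : layerNeg a j θ) (x : Fin (a 0) → ℝ) :
    realization a D (Function.update θ i s) x = realization a D θ x := by
  have hag : ∀ m, layerSum a j ≤ m → Function.update θ i s m = θ m :=
    fun m hm => Function.update_of_ne (by omega) _ _
  have h := fwd_congr_from hag
    (by rw [fwd_eq_zero_of_layerNeg (by omega) hneg' x,
            fwd_eq_zero_of_layerNeg (by omega) hneg x])
  unfold realization
  rw [affApply_congr (fun m hm => hag m (le_trans (layerSum_mono a (by omega)) hm))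
    (h (D - 1) (by omega))]

open Filter in
lemma realization_update_eventually {a : ℕ → ℕ} {D j : ℕ} (hj1 : 1 < j) (hjD : j < D)
    {θ : ℕ → ℝ} (hneg : layerNeg a j θ) {i : ℕ} (hi : i < layerSum a j) :
    ∀ᶠ s in nhds (θ i), ∀ x, realization a D (Function.update θ i s) x = realization a D θ x := by
  by_cases hcase : i < layerSum a (j - 1)
  · filter_upwards with s x
    exact realization_update hj1 hjD hi (layerNeg_update hneg (Or.inr hcase)) hneg x
  · have hθi : θ i < 0 := hneg i (by omega) hi
    filter_upwards [Iio_mem_nhds hθi] with s hs x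
    exact realization_update hj1 hjD hi (layerNeg_update hneg (Or.inl hs)) hneg x

end Det


lemma coord_half {Ω : Type*} [MeasurableSpace Ω] {μ : Measure Ω}
    {Z : Ω → ℕ → ℝ} (hZ : Measurable Z) {c : ℝ} (hc : 0 < c)
    (hunif : ∀ i : ℕ, Measure.map (fun ω => Z ω i) μ =
      (ENNReal.ofReal (2 * c))⁻¹ • MeasureTheory.volume.restrict (Set.Icc (-c) c))
    (i : ℕ) : μ {ω | Z ω i < 0} = 2⁻¹ := by
  have hm : Measurable fun ω => Z ω i := (measurable_pi_apply i).comp hZ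
  have h1 : μ {ω | Z ω i < 0} = (Measure.map (fun ω => Z ω i) μ) (Set.Iio 0) := by
    rw [Measure.map_apply hm measurableSet_Iio]; rfl
  rw [h1, hunif i, Measure.smul_apply, Measure.restrict_apply measurableSet_Iio]
  have h2 : Set.Iio (0:ℝ) ∩ Set.Icc (-c) c = Set.Ico (-c) 0 := by
    ext y
    simp only [Set.mem_inter_iff, Set.mem_Iio, Set.mem_Icc, Set.mem_Ico]
    constructor
    · rintro ⟨h, h', _⟩; exact ⟨h', h⟩
    · rintro ⟨h, h'⟩; exact ⟨h', h, by linarith⟩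
  rw [h2, Real.volume_Ico, smul_eq_mul, show (0:ℝ) - -c = c by ring,
    ENNReal.ofReal_mul (by norm_num : (0:ℝ) ≤ 2),
    ENNReal.mul_inv (Or.inl (by simp)) (Or.inl (by simp)), mul_assoc,
    ENNReal.inv_mul_cancel (ENNReal.ofReal_pos.2 hc).ne' ENNReal.ofReal_ne_top,
    mul_one]
  norm_num

lemma block_prod {Ω : Type*} [MeasurableSpace Ω] {μ : Measure Ω} [IsProbabilityMeasure μ]
    {Z : Ω → ℕ → ℝ}
    (hind : iIndepFun (fun i ω => Z ω i) μ)
    (S : Finset ℕ) :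
    μ (⋂ i ∈ S, {ω | Z ω i < 0}) = ∏ i ∈ S, μ {ω | Z ω i < 0} :=
  hind.meas_biInter (fun i _ => ⟨Set.Iio 0, measurableSet_Iio, rfl⟩)

lemma block_indep {Ω : Type*} [MeasurableSpace Ω] {μ : Measure Ω} [IsProbabilityMeasure μ]
    {Z : Ω → ℕ → ℝ} (hZ : Measurable Z)
    (hind : iIndepFun (fun i ω => Z ω i) μ)
    (b : ℕ → Finset ℕ) (J : Finset ℕ)
    (hdisj : ∀ j ∈ J, ∀ j' ∈ J, j ≠ j' → Disjoint (b j) (b j')) :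
    μ (⋂ j ∈ J, (⋂ i ∈ b j, {ω | Z ω i < 0})ᶜ)
      = ∏ j ∈ J, μ ((⋂ i ∈ b j, {ω | Z ω i < 0})ᶜ) := by
  classical
  induction J using Finset.induction with
  | empty => simp
  | @insert j0 J hj0 ih =>
    rw [Finset.set_biInter_insert, Finset.prod_insert hj0]
    set m : ℕ → MeasurableSpace Ω :=
      fun i => MeasurableSpace.comap (fun ω => Z ω i) inferInstance with hm
    have h_le : ∀ i, m i ≤ ‹MeasurableSpace Ω› :=
      fun i => ((measurable_pi_apply i).comp hZ).comap_le
    have hCm : ∀ (S : Finset ℕ) (i : ℕ), i ∈ S →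
        MeasurableSet[⨆ i ∈ (↑S : Set ℕ), m i] {ω | Z ω i < 0} := by
      intro S i hi
      have h1 : MeasurableSet[m i] {ω | Z ω i < 0} := ⟨Set.Iio 0, measurableSet_Iio, rfl⟩
      exact (le_iSup₂ (f := fun i (_ : i ∈ (↑S : Set ℕ)) => m i) i (by exact_mod_cast hi)) _ h1
    have hAj0 : MeasurableSet[⨆ i ∈ (↑(b j0) : Set ℕ), m i]
        ((⋂ i ∈ b j0, {ω | Z ω i < 0})ᶜ) := by
      refine MeasurableSet.compl ?_
      refine MeasurableSet.biInter (Set.to_countable _) fun i hi => hCm (b j0) i (by exact_mod_cast hi)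
    have hrest : MeasurableSet[⨆ i ∈ (↑(J.biUnion b) : Set ℕ), m i]
        (⋂ j ∈ J, (⋂ i ∈ b j, {ω | Z ω i < 0})ᶜ) := by
      refine MeasurableSet.biInter (Set.to_countable _) fun j hj => MeasurableSet.compl ?_
      refine MeasurableSet.biInter (Set.to_countable _) fun i hi =>
        hCm (J.biUnion b) i (Finset.mem_biUnion.2 ⟨j, by exact_mod_cast hj, by exact_mod_cast hi⟩)
    have hdisjset : Disjoint (↑(b j0) : Set ℕ) (↑(J.biUnion b) : Set ℕ) := by
      apply Finset.disjoint_coe.mpr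
      rw [Finset.disjoint_biUnion_right]
      exact fun j hj => hdisj j0 (Finset.mem_insert_self _ _) j (Finset.mem_insert_of_mem hj)
        (fun h => hj0 (h ▸ hj))
    have hIndep := indep_iSup_of_disjoint h_le hind.iIndep hdisjset
    rw [(Indep_iff _ _ _).1 hIndep _ _ hAj0 hrest,
      ih (fun j hj j' hj' hne => hdisj j (Finset.mem_insert_of_mem hj) j'
        (Finset.mem_insert_of_mem hj') hne)]


lemma kappa_le {κ : ℝ} (hκ : κ ∈ Set.Ioo (0:ℝ) 1) {NN : ℕ} (hNN : 1 ≤ NN)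
    {ρ : ℝ} (hρ0 : 0 < ρ) (hρ1 : ρ ≤ 1) {n : ℕ} (hn : (1 - ρ) ^ n ≤ (1 - κ) / NN) :
    κ ≤ (1 - (1 - ρ) ^ n) ^ NN := by
  have hNN' : (0:ℝ) < NN := by exact_mod_cast hNN
  have hε0 : 0 ≤ (1 - κ) / NN := by
    apply div_nonneg (by linarith [hκ.2]) hNN'.le
  have hε1 : (1 - κ) / NN ≤ 1 := by
    rw [div_le_one hNN']
    have : (1:ℝ) ≤ NN := by exact_mod_cast hNN
    linarith [hκ.1]
  have h1 : (1 - (1 - κ) / NN) ^ NN ≤ (1 - (1 - ρ) ^ n) ^ NN :=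
    pow_le_pow_left₀ (by linarith) (by linarith) NN
  refine le_trans ?_ h1
  have h2 := one_add_mul_le_pow (a := -((1 - κ) / NN)) (by linarith) NN
  have h3 : 1 + (NN:ℝ) * -((1 - κ) / NN) = κ := by
    field_simp
    ring
  calc κ = 1 + (NN:ℝ) * -((1 - κ) / NN) := h3.symm
    _ ≤ (1 + -((1 - κ) / NN)) ^ NN := h2
    _ = (1 - (1 - κ) / NN) ^ NN := by ring_nf

lemma toReal_formula (B n NN : ℕ) :
    (((1 : ℝ≥0∞) - (1 - 2⁻¹ ^ B) ^ n) ^ NN).toReal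
      = (1 - (1 - ((1:ℝ)/2) ^ B) ^ n) ^ NN := by
  have hy1 : ((2:ℝ≥0∞))⁻¹ ^ B ≤ 1 := pow_le_one' (ENNReal.inv_le_one.2 one_le_two) _
  have hz1 : ((1:ℝ≥0∞) - 2⁻¹ ^ B) ≤ 1 := tsub_le_self
  have hz2 : ((1:ℝ≥0∞) - 2⁻¹ ^ B) ^ n ≤ 1 := pow_le_one' hz1 _
  rw [ENNReal.toReal_pow, ENNReal.toReal_sub_of_le hz2 (by simp), ENNReal.toReal_pow,
    ENNReal.toReal_sub_of_le hy1 (by simp), ENNReal.toReal_pow]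
  norm_num

/-- In the SGD setting with i.i.d. uniform-on-`[-c,c]` initializations, for every
`κ ∈ (0,1)` and every `kk ∈ ℕ` there is an architecture with depth and all hidden widths
at least `kk` such that, for all batch sizes `M` and all step counts `T`, the expected
truncated true risk of the selected network is at least
`κ ⬝ min{inf_b E[|b - E(X)|], 1}`. -/
theorem stmt15 {Ω : Type*} [MeasurableSpace Ω] (μ : Measure Ω) [IsProbabilityMeasure μ]
    (d : ℕ) (hd : 0 < d) (u v 𝔲 𝔳 : ℝ) (huv : u < v) (h𝔲𝔳 : 𝔲 < 𝔳)
    (𝔠 : ℝ → ℝ) (h𝔠 : Continuous 𝔠) (γ : ℕ → ℝ) (c : ℝ) (hc : 0 < c)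
    -- the training data
    (X : ℕ → ℕ → ℕ → Ω → Fin d → ℝ) (hXrange : ∀ n t j ω i, X n t j ω i ∈ Set.Icc u v)
    (Y : ℕ → ℕ → ℕ → Ω → ℝ) (hYrange : ∀ n t j ω, Y n t j ω ∈ Set.Icc 𝔲 𝔳)
    (hXm : Measurable (X 0 0 0)) (hYm : Measurable (Y 0 0 0))
    -- the target function is the factorized conditional expectation `E[Y|X]`
    (Etgt : (Fin d → ℝ) → ℝ) (hEm : Measurable Etgt) (hErange : ∀ x, Etgt x ∈ Set.Icc 𝔲 𝔳)
    (hEcond : (fun ω => Etgt (X 0 0 0 ω)) =ᵐ[μ]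
      μ[Y 0 0 0 | MeasurableSpace.comap (X 0 0 0) inferInstance])
    -- the SGD trajectories `Θ D a M n t` and gradients `G` of the empirical risk
    (Θ : ℕ → (ℕ → ℕ) → ℕ → ℕ → ℕ → Ω → ℕ → ℝ)
    (G : ℕ → (ℕ → ℕ) → ℕ → ℕ → ℕ → (ℕ → ℝ) → Ω → ℕ → ℝ)
    (hG : ∀ (D : ℕ) (a : ℕ → ℕ) (hD : 0 < D) (hpos : ∀ i, i ≤ D → 0 < a i)
      (ha0 : a 0 = d) (haD : a D = 1) (M : ℕ) (hM : 1 ≤ M) (n t : ℕ) (θ : ℕ → ℝ)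
      (ω : Ω) (i : ℕ),
      DifferentiableAt ℝ (fun s => (1 / (M : ℝ)) * ∑ j ∈ Finset.Icc 1 M,
        |𝔠 (realization a D (Function.update θ i s)
            (fun q => X n t j ω (Fin.cast ha0 q)) ⟨0, by omega⟩) - Y n t j ω| ^ 2)
        (θ i) →
      G D a M n t θ ω i = deriv (fun s => (1 / (M : ℝ)) * ∑ j ∈ Finset.Icc 1 M,
        |𝔠 (realization a D (Function.update θ i s)
            (fun q => X n t j ω (Fin.cast ha0 q)) ⟨0, by omega⟩) - Y n t j ω| ^ 2)
        (θ i))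
    (hΘstep : ∀ (D : ℕ) (a : ℕ → ℕ) (M n t : ℕ) (ω : Ω) (i : ℕ),
      Θ D a M n (t + 1) ω i =
        Θ D a M n t ω i - γ (t + 1) * G D a M n (t + 1) (Θ D a M n t ω) ω i)
    (hmeasΘ : ∀ D a M n t, Measurable (Θ D a M n t))
    -- the initializations are i.i.d., uniformly distributed on `[-c,c]^{P(a)}`
    -- with independent coordinates
    (hindep : ∀ D a M, iIndepFun
      (fun n ω => Θ D a M (n + 1) 0 ω) μ)
    (hident : ∀ D a M n, 1 ≤ n → IdentDistrib (Θ D a M n 0) (Θ D a M 1 0) μ μ)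
    (hcoord : ∀ D a M, iIndepFun
      (fun i ω => Θ D a M 1 0 ω i) μ)
    (hunif : ∀ D a M (i : ℕ), Measure.map (fun ω => Θ D a M 1 0 ω i) μ =
      (ENNReal.ofReal (2 * c))⁻¹ • MeasureTheory.volume.restrict (Set.Icc (-c) c))
    -- an arbitrary random selection rule `k D a M N T : Ω → {1,…,N} × ℕ`
    (k : ℕ → (ℕ → ℕ) → ℕ → ℕ → ℕ → Ω → ℕ × ℕ)
    (hk : ∀ D a M N T ω, 1 ≤ (k D a M N T ω).1 ∧ (k D a M N T ω).1 ≤ N)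
    (hkmeas : ∀ D a M N T, Measurable (k D a M N T))
    -- measurability of the truncated true risk of the selected network
    (hmeasrisk : ∀ (D : ℕ) (a : ℕ → ℕ) (hD : 0 < D) (hpos : ∀ i, i ≤ D → 0 < a i)
      (ha0 : a 0 = d) (haD : a D = 1) (M N T : ℕ),
      Measurable (fun ω => min
        (∫ x, |𝔠 (realization a D
            (Θ D a M (k D a M N T ω).1 (k D a M N T ω).2 ω)
            (fun q => x (Fin.cast ha0 q)) ⟨0, by omega⟩) - Etgt x|
          ∂(Measure.map (X 0 0 0) μ)) 1)) :
    ∀ κ ∈ Set.Ioo (0 : ℝ) 1, ∀ kk NN : ℕ, 1 ≤ NN →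
      ∃ (D : ℕ) (a : ℕ → ℕ) (hD : 0 < D) (hpos : ∀ i, i ≤ D → 0 < a i)
        (ha0 : a 0 = d) (haD : a D = 1),
        kk ≤ D ∧ (∀ j, 1 ≤ j → j < D → kk ≤ a j) ∧
        ∀ M, 1 ≤ M → ∀ T : ℕ,
          κ * min (⨅ b : ℝ, ∫ ω, |b - Etgt (X 0 0 0 ω)| ∂μ) 1 ≤
            ∫ ω, min
              (∫ x, |𝔠 (realization a D
                  (Θ D a M (k D a M NN T ω).1 (k D a M NN T ω).2 ω)
                  (fun q => x (Fin.cast ha0 q)) ⟨0, by omega⟩) - Etgt x|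
                ∂(Measure.map (X 0 0 0) μ)) 1 ∂μ := by
  intro κ hκ kk NN hNN
  classical
  set W := max kk 1 with hW
  have hW1 : 1 ≤ W := le_max_right _ _
  set B := W * (W + 1) with hB
  have hρ0 : (0:ℝ) < (1/2) ^ B := by positivity
  have hρ1 : ((1:ℝ)/2) ^ B ≤ 1 := pow_le_one₀ (by norm_num) (by norm_num)
  have hNN' : (0:ℝ) < NN := by exact_mod_cast hNN
  have hε0 : (0:ℝ) < (1 - κ) / NN := div_pos (by linarith [hκ.2]) hNN'
  obtain ⟨m, hm⟩ := exists_pow_lt_of_lt_one hε0 (by linarith : 1 - (1/2:ℝ) ^ B < 1)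
  set D := kk + m + 3 with hDdef
  have hD : 0 < D := by omega
  set a : ℕ → ℕ := fun i => if i = 0 then d else if i < D then W else 1 with ha
  have ha0 : a 0 = d := by simp [ha]
  have haD : a D = 1 := by simp [ha]
  have hpos : ∀ i, i ≤ D → 0 < a i := by
    intro i _
    simp only [ha]
    split
    · exact hd
    · split <;> omega
  have haW : ∀ j, 1 ≤ j → j < D → a j = W := by
    intro j h1 h2; simp only [ha]; rw [if_neg (by omega), if_pos h2]
  refine ⟨D, a, hD, hpos, ha0, haD, by omega,
    fun j h1 h2 => by rw [haW j h1 h2]; exact le_max_left _ _, ?_⟩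
  intro M hM T
  -- the SGD dynamics preserve the parameters of an all-negative layer
  have key : ∀ n ω j, 1 < j → j < D → layerNeg a j (Θ D a M n 0 ω) →
      ∀ t, ∀ i, i < layerSum a j → Θ D a M n t ω i = Θ D a M n 0 ω i := by
    intro n ω j hj1 hjD hneg0 t
    induction t with
    | zero => intro i _; rfl
    | succ t ih =>
      have hnegt : layerNeg a j (Θ D a M n t ω) := fun i' h1 h2 => by
        rw [ih i' h2]; exact hneg0 i' h1 h2
      intro i hi
      rw [hΘstep D a M n t ω i]
      have hG0 : G D a M n (t + 1) (Θ D a M n t ω) ω i = 0 := by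
        have hev := realization_update_eventually (D := D) hj1 hjD hnegt hi
        have hconst : (fun s => (1 / (M : ℝ)) * ∑ jj ∈ Finset.Icc 1 M,
            |𝔠 (realization a D (Function.update (Θ D a M n t ω) i s)
                (fun q => X n (t + 1) jj ω (Fin.cast ha0 q)) ⟨0, by omega⟩)
              - Y n (t + 1) jj ω| ^ 2)
            =ᶠ[nhds (Θ D a M n t ω i)] (fun _ => (1 / (M : ℝ)) * ∑ jj ∈ Finset.Icc 1 M,
            |𝔠 (realization a D (Θ D a M n t ω)
                (fun q => X n (t + 1) jj ω (Fin.cast ha0 q)) ⟨0, by omega⟩)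
              - Y n (t + 1) jj ω| ^ 2) := by
          filter_upwards [hev] with s hs
          congr 1
          exact Finset.sum_congr rfl fun jj _ => by rw [hs]
        rw [hG D a hD hpos ha0 haD M hM n (t + 1) (Θ D a M n t ω) ω i
            (hconst.differentiableAt_iff.mpr (differentiableAt_const _)),
          hconst.deriv_eq, deriv_const]
      rw [hG0, mul_zero, sub_zero, ih i hi]
  -- the inactive event
  set SN : Set (ℕ → ℝ) := {θ | Inactive a D θ} with hSN
  have hSNeq : SN = ⋃ j ∈ Finset.Ioo 1 D,
      ⋂ i ∈ Finset.Ico (layerSum a (j - 1)) (layerSum a j),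
        (fun θ : ℕ → ℝ => θ i) ⁻¹' Set.Iio 0 := by
    ext θ
    simp only [hSN, Set.mem_setOf_eq, Inactive, layerNeg, Set.mem_iUnion, Set.mem_iInter,
      Finset.mem_Ioo, Finset.mem_Ico, Set.mem_preimage, Set.mem_Iio]
    constructor
    · rintro ⟨j, h1, h2, h3⟩; exact ⟨j, ⟨h1, h2⟩, fun i hi => h3 i hi.1 hi.2⟩
    · rintro ⟨j, ⟨h1, h2⟩, h3⟩; exact ⟨j, h1, h2, fun i hi1 hi2 => h3 i ⟨hi1, hi2⟩⟩
  have hSNmeas : MeasurableSet SN := by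
    rw [hSNeq]
    exact MeasurableSet.biUnion (Finset.countable_toSet _) fun j _ =>
      MeasurableSet.biInter (Finset.countable_toSet _) fun i _ =>
        measurable_pi_apply i measurableSet_Iio
  set E : Set Ω := ⋂ n ∈ Finset.range NN, (fun ω => Θ D a M (n + 1) 0 ω) ⁻¹' SN with hE
  have hEmeas : MeasurableSet E :=
    MeasurableSet.biInter (Finset.countable_toSet _) fun n _ =>
      (hmeasΘ D a M (n + 1) 0) hSNmeas
  -- measure computations
  have hCmeas : ∀ i : ℕ, MeasurableSet {ω | Θ D a M 1 0 ω i < 0} := fun i =>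
    measurableSet_lt ((measurable_pi_apply i).comp (hmeasΘ D a M 1 0)) measurable_const
  have hAmeas : ∀ j : ℕ, MeasurableSet
      (⋂ i ∈ Finset.Ico (layerSum a (j - 1)) (layerSum a j), {ω | Θ D a M 1 0 ω i < 0}) :=
    fun j => MeasurableSet.biInter (Finset.countable_toSet _) fun i _ => hCmeas i
  have hblock : ∀ j ∈ Finset.Ioo 1 D,
      μ (⋂ i ∈ Finset.Ico (layerSum a (j - 1)) (layerSum a j), {ω | Θ D a M 1 0 ω i < 0})
        = 2⁻¹ ^ B := by
    intro j hj
    simp only [Finset.mem_Ioo] at hj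
    rw [block_prod (hcoord D a M),
      Finset.prod_congr rfl (fun i _ => coord_half (hmeasΘ D a M 1 0) hc (hunif D a M) i),
      Finset.prod_const, Nat.card_Ico]
    congr 1
    obtain ⟨j', rfl⟩ : ∃ j', j = j' + 1 := ⟨j - 1, by omega⟩
    have h1 : a (j' + 1) = W := haW _ (by omega) (by omega)
    have h2 : a j' = W := haW _ (by omega) (by omega)
    simp only [Nat.add_sub_cancel, layerSum_succ, h1, h2]
    omega
  have hdisj : ∀ j ∈ Finset.Ioo 1 D, ∀ j' ∈ Finset.Ioo 1 D, j ≠ j' →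
      Disjoint (Finset.Ico (layerSum a (j - 1)) (layerSum a j))
        (Finset.Ico (layerSum a (j' - 1)) (layerSum a j')) := by
    intro j hj j' hj' hne
    rw [Finset.disjoint_left]
    intro i hi hi'
    simp only [Finset.mem_Ico] at hi hi'
    rcases Nat.lt_or_ge j j' with h | h
    · have := layerSum_mono a (show j ≤ j' - 1 by omega); omega
    · have := layerSum_mono a (show j' ≤ j - 1 by omega); omega
  have hcompl : μ (⋂ j ∈ Finset.Ioo 1 D,
      (⋂ i ∈ Finset.Ico (layerSum a (j - 1)) (layerSum a j), {ω | Θ D a M 1 0 ω i < 0})ᶜ)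
        = (1 - 2⁻¹ ^ B) ^ (D - 2) := by
    rw [block_indep (hmeasΘ D a M 1 0) (hcoord D a M)
        (fun j => Finset.Ico (layerSum a (j - 1)) (layerSum a j)) (Finset.Ioo 1 D) hdisj,
      Finset.prod_congr rfl (fun j hj => by
        rw [prob_compl_eq_one_sub (hAmeas j), hblock j hj]),
      Finset.prod_const, Nat.card_Ioo]
    congr 1
  have hpre : (fun ω => Θ D a M 1 0 ω) ⁻¹' SN = ⋃ j ∈ Finset.Ioo 1 D,
      ⋂ i ∈ Finset.Ico (layerSum a (j - 1)) (layerSum a j), {ω | Θ D a M 1 0 ω i < 0} := by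
    rw [hSNeq]; ext ω; simp
  have hq : μ ((fun ω => Θ D a M 1 0 ω) ⁻¹' SN) = 1 - (1 - 2⁻¹ ^ B) ^ (D - 2) := by
    rw [hpre]
    have h1 : (⋃ j ∈ Finset.Ioo 1 D,
        ⋂ i ∈ Finset.Ico (layerSum a (j - 1)) (layerSum a j), {ω | Θ D a M 1 0 ω i < 0})
        = (⋂ j ∈ Finset.Ioo 1 D,
          (⋂ i ∈ Finset.Ico (layerSum a (j - 1)) (layerSum a j),
            {ω | Θ D a M 1 0 ω i < 0})ᶜ)ᶜ := by
      simp
    have hmeas2 : MeasurableSet (⋂ j ∈ Finset.Ioo 1 D,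
        (⋂ i ∈ Finset.Ico (layerSum a (j - 1)) (layerSum a j),
          {ω | Θ D a M 1 0 ω i < 0})ᶜ) :=
      MeasurableSet.biInter (Finset.countable_toSet _) fun j _ => (hAmeas j).compl
    rw [h1, prob_compl_eq_one_sub hmeas2, hcompl]
  have hμE : μ E = (1 - (1 - 2⁻¹ ^ B) ^ (D - 2)) ^ NN := by
    rw [hE, (hindep D a M).meas_biInter (fun n _ => ⟨SN, hSNmeas, rfl⟩),
      Finset.prod_congr rfl (fun n _ =>
        ((hident D a M (n + 1) (by omega)).measure_mem_eq hSNmeas).trans hq),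
      Finset.prod_const, Finset.card_range]
  have hκE : κ ≤ (μ E).toReal := by
    rw [hμE, toReal_formula]
    exact kappa_le hκ hNN hρ0 hρ1
      (le_trans (pow_le_pow_of_le_one (by linarith) (by linarith) (by omega : m ≤ D - 2)) hm.le)
  -- the truncated risk bound
  set Iinf := ⨅ b : ℝ, ∫ ω, |b - Etgt (X 0 0 0 ω)| ∂μ with hIinf
  have hbdd : BddBelow (Set.range fun b : ℝ => ∫ ω, |b - Etgt (X 0 0 0 ω)| ∂μ) :=
    ⟨0, by rintro r ⟨b', rfl⟩; exact integral_nonneg fun ω => abs_nonneg _⟩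
  have hinf0 : 0 ≤ Iinf := le_ciInf fun b => integral_nonneg fun ω => abs_nonneg _
  have hc00 : 0 ≤ min Iinf 1 := le_min hinf0 zero_le_one
  have main : ∀ f : Ω → ℝ, Measurable f → (∀ ω, 0 ≤ f ω) → (∀ ω, f ω ≤ 1) →
      (∀ ω ∈ E, min Iinf 1 ≤ f ω) → κ * min Iinf 1 ≤ ∫ ω, f ω ∂μ := by
    intro f hfm hf0 hf1 hEl
    have hfint : Integrable f μ :=
      (integrable_const (1:ℝ)).mono' hfm.aestronglyMeasurable
        (Filter.Eventually.of_forall fun ω => by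
          rw [Real.norm_eq_abs, abs_of_nonneg (hf0 ω)]; exact hf1 ω)
    calc κ * min Iinf 1 ≤ (μ E).toReal * min Iinf 1 :=
          mul_le_mul_of_nonneg_right hκE hc00
      _ = ∫ _ω in E, min Iinf 1 ∂μ := by rw [setIntegral_const, smul_eq_mul]; rfl
      _ ≤ ∫ ω in E, f ω ∂μ := setIntegral_mono_on
          (integrableOn_const (measure_lt_top μ E).ne) hfint.integrableOn hEmeas hEl
      _ ≤ ∫ ω, f ω ∂μ := setIntegral_le_integral hfint (Filter.Eventually.of_forall hf0)
  apply main
  · exact hmeasrisk D a hD hpos ha0 haD M NN T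
  · exact fun ω => le_min (integral_nonneg fun x => abs_nonneg _) zero_le_one
  · exact fun ω => min_le_right _ _
  · intro ω hω
    obtain ⟨hk1, hk2⟩ := hk D a M NN T ω
    have hmem : Inactive a D (Θ D a M (k D a M NN T ω).1 0 ω) := by
      have h := Set.mem_iInter₂.1 hω ((k D a M NN T ω).1 - 1) (Finset.mem_range.2 (by omega))
      simpa [show (k D a M NN T ω).1 - 1 + 1 = (k D a M NN T ω).1 from by omega, hSN] using h
    obtain ⟨j, hj1, hjD', hneg⟩ := hmem
    have hnegt : layerNeg a j (Θ D a M (k D a M NN T ω).1 (k D a M NN T ω).2 ω) :=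
      fun i h1 h2 => by
        rw [key _ ω j hj1 hjD' hneg _ i h2]; exact hneg i h1 h2
    refine min_le_min ?_ le_rfl
    set b := 𝔠 (realization a D (Θ D a M (k D a M NN T ω).1 (k D a M NN T ω).2 ω)
      (fun _ : Fin (a 0) => 0) ⟨0, by omega⟩) with hbdef
    calc Iinf ≤ ∫ ω', |b - Etgt (X 0 0 0 ω')| ∂μ := ciInf_le hbdd b
      _ = ∫ x, |b - Etgt x| ∂(Measure.map (X 0 0 0) μ) :=
          (integral_map hXm.aemeasurable
            ((measurable_const.sub hEm).abs).aestronglyMeasurable).symm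
      _ = ∫ x, |𝔠 (realization a D (Θ D a M (k D a M NN T ω).1 (k D a M NN T ω).2 ω)
            (fun q => x (Fin.cast ha0 q)) ⟨0, by omega⟩) - Etgt x|
            ∂(Measure.map (X 0 0 0) μ) := by
          refine integral_congr_ae (Filter.Eventually.of_forall fun x => ?_)
          rw [hbdef]
          exact congrArg (fun z => |z - Etgt x|)
            (congrArg 𝔠 (congrFun (realization_const hj1 hjD' hnegt _ _) _)).symm
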